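/- Let A be a skew brace and I an ideal of A. Write J = [I,A]_Ab for the additive subgroup generated by { i+b-i-b, i*b, i∘b∘i'∘b' : i ∈ I, b ∈ A }. Then for all k ∈ J and b ∈ A, the element b*k belongs to J. -/

import Mathlib

/-- A skew brace: a type with an additive group structure and a second group
operation `circ` (with inverse `cinv` and the same identity `0`) satisfying the
skew brace compatibility law `a ∘ (b + c) = a ∘ b - a + a ∘ c`. -/
class SkewBrace (A : Type*) extends AddGroup A where
  circ : A → A → A
  cinv : A → A
  circ_assoc : ∀ a b c : A, circ (circ a b) c = circ a (circ b c)
  zero_circ : ∀ a : A, circ 0 a = a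
  circ_zero : ∀ a : A, circ a 0 = a
  cinv_circ : ∀ a : A, circ (cinv a) a = 0
  circ_cinv : ∀ a : A, circ a (cinv a) = 0
  compat : ∀ a b c : A, circ a (b + c) = circ a b - a + circ a c

namespace SkewBrace

variable {A : Type*} [SkewBrace A]

/-- The star operation `a * b = -a + a ∘ b - b`. -/
def star (a b : A) : A := -a + circ a b - b

/-- The right distributor `[a,b,c] = (a+b)∘c - b∘c + c - a∘c`. -/
def rd (a b c : A) : A := circ (a + b) c - circ b c + c - circ a c

/-- An ideal of a skew brace: a normal additive subgroup closed under the
star operation on both sides. -/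
def IsIdeal (I : AddSubgroup A) : Prop :=
  (∀ a : A, ∀ x ∈ I, a + x - a ∈ I) ∧
  (∀ a : A, ∀ x ∈ I, star a x ∈ I) ∧
  (∀ a : A, ∀ x ∈ I, star x a ∈ I)

/-- `Z_R(A)`: additively central elements annihilating all right distributors. -/
def ZR (A : Type*) [SkewBrace A] : Set A :=
  {z | (∀ a : A, z + a = a + z) ∧ ∀ b c : A, rd z b c = 0 ∧ rd b z c = 0 ∧ rd b c z = 0}

end SkewBrace

open SkewBrace

namespace SkewBraceAux

variable {A : Type*} [SkewBrace A]

lemma cinv_circ_circ (a x : A) :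
    SkewBrace.circ (SkewBrace.cinv a) (SkewBrace.circ a x) = x := by
  rw [← SkewBrace.circ_assoc, SkewBrace.cinv_circ, SkewBrace.zero_circ]

lemma circ_cinv_circ (a x : A) :
    SkewBrace.circ a (SkewBrace.circ (SkewBrace.cinv a) x) = x := by
  rw [← SkewBrace.circ_assoc, SkewBrace.circ_cinv, SkewBrace.zero_circ]

lemma circ_eq (a b : A) : SkewBrace.circ a b = a + SkewBrace.star a b + b := by
  simp [SkewBrace.star, sub_eq_add_neg, add_assoc]

end SkewBraceAux

open SkewBraceAux

theorem stmt12 {A : Type*} [SkewBrace A] (I : AddSubgroup A) (hI : IsIdeal I)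
    (J : AddSubgroup A)
    (hJ : J = AddSubgroup.closure
      {x : A | ∃ i ∈ I, ∃ b : A,
        x = i + b - i - b ∨ x = star i b ∨
        x = SkewBrace.circ (SkewBrace.circ (SkewBrace.circ i b) (SkewBrace.cinv i))
              (SkewBrace.cinv b)}) :
    ∀ k ∈ J, ∀ b : A, star b k ∈ J := by
  obtain ⟨hN, hL, hR⟩ := hI
  set S : Set A :=
      {x : A | ∃ i ∈ I, ∃ b : A,
        x = i + b - i - b ∨ x = SkewBrace.star i b ∨
        x = SkewBrace.circ (SkewBrace.circ (SkewBrace.circ i b) (SkewBrace.cinv i))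
              (SkewBrace.cinv b)} with hS
  -- I is closed under cinv
  have hIcinv : ∀ i ∈ I, SkewBrace.cinv i ∈ I := by
    intro i hi
    have h0 : (i + SkewBrace.star i (SkewBrace.cinv i)) + SkewBrace.cinv i = 0 :=
      (circ_eq i (SkewBrace.cinv i)).symm.trans (SkewBrace.circ_cinv i)
    have h1 : SkewBrace.cinv i = -(i + SkewBrace.star i (SkewBrace.cinv i)) :=
      eq_neg_of_add_eq_zero_right h0
    rw [h1, neg_add_rev]
    exact AddSubgroup.add_mem I
      (AddSubgroup.neg_mem I (hR (SkewBrace.cinv i) i hi)) (AddSubgroup.neg_mem I hi)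
  -- I is closed under circle conjugation: b ∘ i ∘ b⁻¹ ∈ I
  have hIconj : ∀ b : A, ∀ i ∈ I,
      SkewBrace.circ (SkewBrace.circ b i) (SkewBrace.cinv b) ∈ I := by
    intro b i hi
    set m : A := i + SkewBrace.star i (SkewBrace.cinv b) with hm
    have hmI : m ∈ I := AddSubgroup.add_mem I hi (hR (SkewBrace.cinv b) i hi)
    have h2 : SkewBrace.circ i (SkewBrace.cinv b) = m + SkewBrace.cinv b := by
      rw [circ_eq i (SkewBrace.cinv b)]
    have h1 : SkewBrace.circ (SkewBrace.circ b i) (SkewBrace.cinv b)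
        = b + SkewBrace.star b m + m - b := by
      rw [SkewBrace.circ_assoc, h2, SkewBrace.compat, SkewBrace.circ_cinv,
        circ_eq b m, add_zero]
    rw [h1]
    have h3 : b + (SkewBrace.star b m + m) - b ∈ I :=
      hN b _ (AddSubgroup.add_mem I (hL b m hmI) hmI)
    simpa [sub_eq_add_neg, add_assoc] using h3
  -- circle commutators with one entry in I lie in I
  have hIcc : ∀ i ∈ I, ∀ b : A,
      SkewBrace.circ (SkewBrace.circ (SkewBrace.circ i b) (SkewBrace.cinv i))
        (SkewBrace.cinv b) ∈ I := by
    intro i hi b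
    have h1 : SkewBrace.circ (SkewBrace.circ (SkewBrace.circ i b) (SkewBrace.cinv i))
        (SkewBrace.cinv b)
        = SkewBrace.circ i (SkewBrace.circ (SkewBrace.circ b (SkewBrace.cinv i))
            (SkewBrace.cinv b)) := by
      rw [SkewBrace.circ_assoc i b (SkewBrace.cinv i),
        SkewBrace.circ_assoc i (SkewBrace.circ b (SkewBrace.cinv i)) (SkewBrace.cinv b)]
    rw [h1]
    have hj2 : SkewBrace.circ (SkewBrace.circ b (SkewBrace.cinv i)) (SkewBrace.cinv b) ∈ I :=
      hIconj b _ (hIcinv i hi)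
    rw [circ_eq]
    exact AddSubgroup.add_mem I (AddSubgroup.add_mem I hi (hL i _ hj2)) hj2
  -- generators lie in I
  have hSI : S ⊆ (I : Set A) := by
    rintro x ⟨i, hi, b, hx | hx | hx⟩
    · rw [hx]
      have h2 : i + (b + -i - b) ∈ I := AddSubgroup.add_mem I hi (hN b (-i) (AddSubgroup.neg_mem I hi))
      simpa [sub_eq_add_neg, add_assoc] using h2
    · rw [hx]; exact hR b i hi
    · rw [hx]; exact hIcc i hi b
  have hJI : J ≤ I := by
    rw [hJ]; exact (AddSubgroup.closure_le I).mpr hSI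
  have hSJ : ∀ x ∈ S, x ∈ J := by
    intro x hx; rw [hJ]; exact AddSubgroup.subset_closure hx
  -- J is a normal additive subgroup
  haveI hNormal : J.Normal := by
    constructor
    intro n hn g
    rw [hJ] at hn ⊢
    induction hn using AddSubgroup.closure_induction with
    | mem x hx =>
        have hxI : x ∈ I := hSI hx
        have hgen : x + g - x - g ∈ AddSubgroup.closure S :=
          AddSubgroup.subset_closure ⟨x, hxI, g, Or.inl rfl⟩
        have h1 : g + x + -g = -(x + g - x - g) + x := by
          simp [sub_eq_add_neg, neg_add_rev, neg_neg, add_assoc]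
        rw [h1]
        exact AddSubgroup.add_mem _ (AddSubgroup.neg_mem _ hgen)
          (AddSubgroup.subset_closure hx)
    | zero => simpa using AddSubgroup.zero_mem _
    | add x y hx hy ihx ihy =>
        have h1 : g + (x + y) + -g = (g + x + -g) + (g + y + -g) := by
          simp [add_assoc, neg_add_cancel_left]
        rw [h1]; exact AddSubgroup.add_mem _ ihx ihy
    | neg x hx ihx =>
        have h1 : g + -x + -g = -(g + x + -g) := by
          simp [neg_add_rev, neg_neg, add_assoc]
        rw [h1]; exact AddSubgroup.neg_mem _ ihx
  -- pass to the quotient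
  have hπ : ∀ x : A, (x : A ⧸ J) = 0 ↔ x ∈ J := fun x => QuotientAddGroup.eq_zero_iff x
  -- images of I commute with everything
  have hcen : ∀ i ∈ I, ∀ b : A, (i : A ⧸ J) + (b : A ⧸ J) = (b : A ⧸ J) + (i : A ⧸ J) := by
    intro i hi b
    have h0 : ((i + b - i - b : A) : A ⧸ J) = 0 :=
      (hπ _).mpr (hSJ _ ⟨i, hi, b, Or.inl rfl⟩)
    rw [QuotientAddGroup.mk_sub, QuotientAddGroup.mk_sub, QuotientAddGroup.mk_add] at h0
    exact sub_eq_iff_eq_add.mp (sub_eq_zero.mp h0)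
  -- circ with left factor in I splits additively in the quotient
  have hFc : ∀ i ∈ I, ∀ b : A,
      ((SkewBrace.circ i b : A) : A ⧸ J) = (i : A ⧸ J) + (b : A ⧸ J) := by
    intro i hi b
    have h0 : ((SkewBrace.star i b : A) : A ⧸ J) = 0 :=
      (hπ _).mpr (hSJ _ ⟨i, hi, b, Or.inr (Or.inl rfl)⟩)
    rw [circ_eq i b, QuotientAddGroup.mk_add, QuotientAddGroup.mk_add, h0, add_zero]
  -- main computation
  intro k hk b
  have hkI : k ∈ I := hJI hk
  rw [← hπ]
  set u : A := SkewBrace.circ (SkewBrace.circ (SkewBrace.circ k b) (SkewBrace.cinv k))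
      (SkewBrace.cinv b) with hu
  set j : A := SkewBrace.circ (SkewBrace.circ b k) (SkewBrace.cinv b) with hjdef
  set w : A := SkewBrace.circ j (SkewBrace.cinv k) with hw
  have hjI : j ∈ I := hIconj b k hkI
  have hwI : w ∈ I := by
    rw [hw, circ_eq]
    exact AddSubgroup.add_mem I (AddSubgroup.add_mem I hjI (hR _ j hjI)) (hIcinv k hkI)
  have hu0 : ((u : A) : A ⧸ J) = 0 :=
    (hπ _).mpr (hSJ _ ⟨k, hkI, b, Or.inr (Or.inr rfl)⟩)
  -- w ∘ u = 0
  have hwu : SkewBrace.circ w u = 0 := by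
    rw [hw, hjdef, hu]
    simp only [SkewBrace.circ_assoc]
    rw [cinv_circ_circ, cinv_circ_circ, circ_cinv_circ, SkewBrace.circ_cinv]
  have hw0 : ((w : A) : A ⧸ J) = 0 := by
    have h := hFc w hwI u
    rw [hwu, hu0, add_zero] at h
    simpa using h.symm
  -- j = w ∘ k
  have hjwi : j = SkewBrace.circ w k := by
    rw [hw, SkewBrace.circ_assoc, SkewBrace.cinv_circ, SkewBrace.circ_zero]
  have hjq : ((j : A) : A ⧸ J) = ((k : A) : A ⧸ J) := by
    rw [hjwi, hFc w hwI k, hw0, zero_add]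
  -- circ b k = circ j b
  have hbi : SkewBrace.circ b k = SkewBrace.circ j b := by
    rw [hjdef, SkewBrace.circ_assoc, SkewBrace.cinv_circ, SkewBrace.circ_zero]
  have hbiq : ((SkewBrace.circ b k : A) : A ⧸ J) = (b : A ⧸ J) + (k : A ⧸ J) := by
    rw [hbi, hFc j hjI b, hjq, hcen k hkI b]
  show ((SkewBrace.star b k : A) : A ⧸ J) = 0
  rw [SkewBrace.star, QuotientAddGroup.mk_sub, QuotientAddGroup.mk_add,
    QuotientAddGroup.mk_neg, hbiq, neg_add_cancel_left, sub_self]
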